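/- Let f ∈ L¹(0,∞) be Hölder continuous at r₀ = ν(E) = √(E²−m²) > 0, where |E| > m > 0. Then lim_{μ→0⁺} (μ/π) ∫₀^∞ f(r) / ((√(r²+m²) − |E|)² + μ²) dr = f(ν(E))·|E|/ν(E). -/

import Mathlib

open MeasureTheory

open Set Filter Real



private lemma dc_amgm {A B t : ℝ} (hA : 0 ≤ A) (hB : 0 ≤ B) (ht0 : 0 ≤ t) (ht1 : t ≤ 1) :
    A ^ t * B ^ (1 - t) ≤ A + B := by
  have hM : 0 ≤ max A B := le_trans hA (le_max_left _ _)
  have h1 : A ^ t ≤ (max A B) ^ t := Real.rpow_le_rpow hA (le_max_left _ _) ht0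
  have h2 : B ^ (1 - t) ≤ (max A B) ^ (1 - t) :=
    Real.rpow_le_rpow hB (le_max_right _ _) (by linarith)
  calc A ^ t * B ^ (1 - t) ≤ (max A B) ^ t * (max A B) ^ (1 - t) := by
        exact mul_le_mul h1 h2 (Real.rpow_nonneg hB _) (Real.rpow_nonneg hM _)
    _ = (max A B) ^ (t + (1 - t)) := (Real.rpow_add_of_nonneg hM ht0 (by linarith)).symm
    _ = max A B := by norm_num
    _ ≤ A + B := by rcases max_cases A B with ⟨h, _⟩ | ⟨h, _⟩ <;> rw [h] <;> linarith

private lemma dc_abs_rpow_II {q : ℝ} (hq : -1 < q) (ν A B : ℝ) :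
    IntervalIntegrable (fun r => |r - ν| ^ q) volume A B := by
  have habs : ∀ C : ℝ, IntervalIntegrable (fun x : ℝ => |x| ^ q) volume 0 C := by
    intro C
    rcases le_or_gt 0 C with hC | hC
    · rw [intervalIntegrable_iff_integrableOn_Ioc_of_le hC]
      exact MeasureTheory.IntegrableOn.congr_fun
        (intervalIntegral.intervalIntegrable_rpow' hq (a := 0) (b := C)).1
        (fun x hx => by rw [abs_of_pos hx.1]) measurableSet_Ioc
    · rw [IntervalIntegrable.iff_comp_neg]
      simp only [neg_zero]
      rw [intervalIntegrable_iff_integrableOn_Ioc_of_le (by linarith : (0:ℝ) ≤ -C)]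
      exact MeasureTheory.IntegrableOn.congr_fun
        (intervalIntegral.intervalIntegrable_rpow' hq (a := 0) (b := -C)).1
        (fun x hx => by rw [abs_neg, abs_of_pos hx.1]) measurableSet_Ioc
  have hall : IntervalIntegrable (fun x : ℝ => |x| ^ q) volume (A - ν) (B - ν) :=
    ((habs (A - ν)).symm.trans (habs (B - ν)))
  have := hall.comp_sub_right ν
  simpa using this

private lemma dc_arctan_int {k μ ν : ℝ} (hk : 0 < k) (hμ : 0 < μ) (b : ℝ) :
    IntegrableOn (fun r => ((k * (r - ν)) ^ 2 + μ ^ 2)⁻¹) (Set.Ioi b) ∧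
    ∫ r in Set.Ioi b, ((k * (r - ν)) ^ 2 + μ ^ 2)⁻¹
      = (k * μ)⁻¹ * (π / 2 - Real.arctan (k * (b - ν) / μ)) := by
  set F : ℝ → ℝ := fun r => (k * μ)⁻¹ * Real.arctan (k * (r - ν) / μ) with hF
  have hderiv : ∀ x : ℝ, HasDerivAt F (((k * (x - ν)) ^ 2 + μ ^ 2)⁻¹) x := by
    intro x
    have h1 : HasDerivAt (fun r : ℝ => k * (r - ν) / μ) (k / μ) x := by
      simpa using (((hasDerivAt_id x).sub_const ν).const_mul k).div_const μ
    have h2 := (Real.hasDerivAt_arctan (k * (x - ν) / μ)).comp x h1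
    have h3 := h2.const_mul (k * μ)⁻¹
    refine h3.congr_deriv ?_
    field_simp
    ring
  have htop : Tendsto F atTop (nhds ((k * μ)⁻¹ * (π / 2))) := by
    have hin : Tendsto (fun r : ℝ => k * (r - ν) / μ) atTop atTop := by
      apply Tendsto.atTop_div_const hμ
      exact (tendsto_atTop_add_const_right _ (-ν) tendsto_id).const_mul_atTop hk |>.congr
        (by intro x; simp only [id_eq]; ring)
    exact ((Real.tendsto_arctan_atTop.mono_right nhdsWithin_le_nhds).comp hin).const_mul _
  have hpos : ∀ x ∈ Set.Ioi b, (0:ℝ) ≤ ((k * (x - ν)) ^ 2 + μ ^ 2)⁻¹ := by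
    intro x _; positivity
  have hcont : ContinuousWithinAt F (Set.Ici b) b := (hderiv b).continuousAt.continuousWithinAt
  refine ⟨integrableOn_Ioi_deriv_of_nonneg hcont (fun x _ => hderiv x) hpos htop, ?_⟩
  rw [integral_Ioi_of_hasDerivAt_of_nonneg hcont (fun x _ => hderiv x) hpos htop]
  rw [hF]
  ring

private lemma dc_inv_sq_int {ν : ℝ} (hν : 0 < ν) :
    IntegrableOn (fun r : ℝ => ((r - ν) ^ 2)⁻¹) (Set.Ioi (2 * ν)) ∧
    ∫ r in Set.Ioi (2 * ν), ((r - ν) ^ 2)⁻¹ = ν⁻¹ := by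
  set F : ℝ → ℝ := fun r => -(r - ν)⁻¹ with hF
  have hderiv : ∀ x ∈ Set.Ioi (2 * ν), HasDerivAt F (((x - ν) ^ 2)⁻¹) x := by
    intro x hx
    have hne : x - ν ≠ 0 := by simp only [Set.mem_Ioi] at hx; nlinarith
    have h1 : HasDerivAt (fun r : ℝ => (r - ν)⁻¹) (-((x - ν) ^ 2)⁻¹ * 1) x :=
      (hasDerivAt_inv hne).comp x ((hasDerivAt_id x).sub_const ν)
    have h4 := h1.neg
    simp only [neg_mul, mul_one, neg_neg] at h4
    exact h4
  have htop : Tendsto F atTop (nhds 0) := by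
    rw [show (0:ℝ) = -0 by ring]
    exact (tendsto_inv_atTop_zero.comp (tendsto_atTop_add_const_right _ (-ν) tendsto_id)).neg.congr
      (by intro x; simp [hF, sub_eq_add_neg])
  have hpos : ∀ x ∈ Set.Ioi (2 * ν), (0:ℝ) ≤ ((x - ν) ^ 2)⁻¹ := by intro x _; positivity
  have hcont : ContinuousWithinAt F (Set.Ici (2 * ν)) (2 * ν) := by
    have hne : (2 * ν : ℝ) - ν ≠ 0 := by nlinarith
    exact (((continuousAt_id.sub continuousAt_const).inv₀ hne).neg).continuousWithinAt
  refine ⟨integrableOn_Ioi_deriv_of_nonneg hcont hderiv hpos htop, ?_⟩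
  rw [integral_Ioi_of_hasDerivAt_of_nonneg hcont hderiv hpos htop]
  rw [hF]
  simp only []
  rw [show 2 * ν - ν = ν by ring]
  ring


section Geom
variable {m a ν : ℝ}

private lemma dc_heq (hm : 0 < m) (ha : m < a) (hν2 : ν ^ 2 + m ^ 2 = a ^ 2) (r : ℝ) :
    (Real.sqrt (r ^ 2 + m ^ 2) - a) * (Real.sqrt (r ^ 2 + m ^ 2) + a) = (r - ν) * (r + ν) := by
  have hsq : Real.sqrt (r ^ 2 + m ^ 2) ^ 2 = r ^ 2 + m ^ 2 := Real.sq_sqrt (by positivity)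
  linear_combination hsq + hν2

private lemma dc_sfacts (hm : 0 < m) (r : ℝ) (hr : 0 ≤ r) :
    m ≤ Real.sqrt (r ^ 2 + m ^ 2) ∧ r ≤ Real.sqrt (r ^ 2 + m ^ 2) ∧
      Real.sqrt (r ^ 2 + m ^ 2) ≤ r + m := by
  have hsq : Real.sqrt (r ^ 2 + m ^ 2) ^ 2 = r ^ 2 + m ^ 2 := Real.sq_sqrt (by positivity)
  have h0 : 0 ≤ Real.sqrt (r ^ 2 + m ^ 2) := Real.sqrt_nonneg _
  refine ⟨by nlinarith, by nlinarith, by nlinarith⟩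

private lemma dc_gu (hm : 0 < m) (ha : m < a) (hν0 : 0 < ν) (hν2 : ν ^ 2 + m ^ 2 = a ^ 2)
    (r : ℝ) (hr : 0 ≤ r) : |Real.sqrt (r ^ 2 + m ^ 2) - a| ≤ |r - ν| := by
  have ha0 : 0 < a := hm.trans ha
  have hνa : ν < a := by nlinarith
  obtain ⟨h1, h2, h3⟩ := dc_sfacts hm r hr
  have heq := dc_heq hm ha hν2 r
  have hsa : 0 < Real.sqrt (r ^ 2 + m ^ 2) + a := by linarith
  have habs : |Real.sqrt (r ^ 2 + m ^ 2) - a| * (Real.sqrt (r ^ 2 + m ^ 2) + a)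
      = |r - ν| * (r + ν) := by
    rw [← abs_of_pos hsa, ← abs_mul, heq, abs_mul, abs_of_pos (by linarith : (0:ℝ) < r + ν)]
  nlinarith [abs_nonneg (r - ν), abs_nonneg (Real.sqrt (r ^ 2 + m ^ 2) - a)]

private lemma dc_gl (hm : 0 < m) (ha : m < a) (hν0 : 0 < ν) (hν2 : ν ^ 2 + m ^ 2 = a ^ 2)
    (r : ℝ) (hr : 0 ≤ r) :
    (ν / (m + a)) * |r - ν| ≤ |Real.sqrt (r ^ 2 + m ^ 2) - a| := by
  have ha0 : 0 < a := hm.trans ha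
  have hνa : ν < a := by nlinarith
  have hma : 0 < m + a := by linarith
  obtain ⟨h1, h2, h3⟩ := dc_sfacts hm r hr
  have heq := dc_heq hm ha hν2 r
  have hsa : 0 < Real.sqrt (r ^ 2 + m ^ 2) + a := by linarith
  have habs : |Real.sqrt (r ^ 2 + m ^ 2) - a| * (Real.sqrt (r ^ 2 + m ^ 2) + a)
      = |r - ν| * (r + ν) := by
    rw [← abs_of_pos hsa, ← abs_mul, heq, abs_mul, abs_of_pos (by linarith : (0:ℝ) < r + ν)]
  have hkey : ν * (Real.sqrt (r ^ 2 + m ^ 2) + a) ≤ (r + ν) * (m + a) := by nlinarith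
  rw [div_mul_eq_mul_div, div_le_iff₀ hma]
  nlinarith [abs_nonneg (r - ν), abs_nonneg (Real.sqrt (r ^ 2 + m ^ 2) - a)]

private lemma dc_kg (hm : 0 < m) (ha : m < a) (hν0 : 0 < ν) (hν2 : ν ^ 2 + m ^ 2 = a ^ 2)
    (r : ℝ) (hr : r ∈ Set.Ioc 0 (2 * ν)) :
    |(ν / a) * (r - ν) - (Real.sqrt (r ^ 2 + m ^ 2) - a)|
      ≤ (3 * m / (a * (m + a))) * (r - ν) ^ 2 := by
  have ha0 : 0 < a := hm.trans ha
  have hνa : ν < a := by nlinarith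
  have hma : 0 < m + a := by linarith
  obtain ⟨hr0, hr2⟩ := hr
  obtain ⟨h1, h2, h3⟩ := dc_sfacts hm r hr0.le
  set s := Real.sqrt (r ^ 2 + m ^ 2) with hs
  have hsq : s ^ 2 = r ^ 2 + m ^ 2 := Real.sq_sqrt (by positivity)
  have heq := dc_heq hm ha hν2 r
  have e1 : ((ν / a) * (r - ν) - (s - a)) * (a * (s + a)) = (r - ν) * (ν * s - a * r) := by
    field_simp
    linear_combination (-a) * heq
  have e2 : (ν * s - a * r) * (ν * s + a * r) = m ^ 2 * ((ν - r) * (ν + r)) := by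
    linear_combination ν ^ 2 * hsq + r ^ 2 * hν2
  have h4 : 0 < ν * s + a * r := by nlinarith
  have e2' : |ν * s - a * r| * (ν * s + a * r) = m ^ 2 * (|r - ν| * (ν + r)) := by
    rw [← abs_of_pos h4, ← abs_mul, e2, abs_mul, abs_mul, abs_sub_comm,
      abs_of_pos (by positivity : (0:ℝ) < m ^ 2), abs_of_pos (by linarith : (0:ℝ) < ν + r)]
  have h5 : |ν * s - a * r| ≤ 3 * m * |r - ν| := by
    have hb1 : ν * m ≤ ν * s + a * r := by nlinarith
    have hb2 : |ν * s - a * r| * (ν * m) ≤ |ν * s - a * r| * (ν * s + a * r) :=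
      mul_le_mul_of_nonneg_left hb1 (abs_nonneg _)
    have hb3 : m ^ 2 * (|r - ν| * (ν + r)) ≤ m ^ 2 * (|r - ν| * (3 * ν)) :=
      mul_le_mul_of_nonneg_left
        (mul_le_mul_of_nonneg_left (by linarith : ν + r ≤ 3 * ν) (abs_nonneg _))
        (by positivity)
    nlinarith [abs_nonneg (ν * s - a * r), abs_nonneg (r - ν), mul_pos hν0 hm]
  have hsa : 0 < a * (s + a) := by nlinarith
  have e1' : |(ν / a) * (r - ν) - (s - a)| * (a * (s + a)) = |r - ν| * |ν * s - a * r| := by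
    rw [← abs_of_pos hsa, ← abs_mul, e1, abs_mul]
  rw [show (3 * m / (a * (m + a))) * (r - ν) ^ 2 = 3 * m * (r - ν) ^ 2 / (a * (m + a)) by ring,
    le_div_iff₀ (by positivity : (0:ℝ) < a * (m + a))]
  have habs2 : |r - ν| * |r - ν| = (r - ν) ^ 2 := by rw [← abs_mul, ← sq]; exact abs_of_nonneg (sq_nonneg _)
  have hb4 : |(ν / a) * (r - ν) - (s - a)| * (a * (m + a))
      ≤ |(ν / a) * (r - ν) - (s - a)| * (a * (s + a)) :=
    mul_le_mul_of_nonneg_left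
      (mul_le_mul_of_nonneg_left (by linarith : m + a ≤ s + a) ha0.le) (abs_nonneg _)
  have c1 : |(ν / a) * (r - ν) - (s - a)| * (a * (m + a)) ≤ |r - ν| * |ν * s - a * r| :=
    hb4.trans (le_of_eq e1')
  have c2 : |r - ν| * |ν * s - a * r| ≤ |r - ν| * (3 * m * |r - ν|) :=
    mul_le_mul_of_nonneg_left h5 (abs_nonneg _)
  have c3 : |r - ν| * (3 * m * |r - ν|) = 3 * m * (r - ν) ^ 2 := by
    rw [← habs2]; ring
  linarith

end Geom

private lemma dc_bound1 (c L ϑ μ X G Δ : ℝ) (hc0 : 0 < c) (hL : 0 < L) (hϑ0 : 0 < ϑ)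
    (hϑ1 : ϑ ≤ 1) (hμ : 0 < μ) (hX0 : 0 < X) (hG : c ^ 2 * X ^ 2 + μ ^ 2 ≤ G)
    (hΔ : |Δ| ≤ L * X ^ ϑ) :
    μ * (|Δ| / G) ≤ (L / c ^ (1 + ϑ/2)) * μ ^ (ϑ/2) * X ^ (ϑ/2 - 1) := by
  have hden : (0:ℝ) < c ^ (1 + ϑ/2) * X ^ (1 + ϑ/2) * μ ^ (1 - ϑ/2) := by positivity
  have hG0 : (0:ℝ) < G := lt_of_lt_of_le (by positivity) hG
  have hamgm : c ^ (1 + ϑ/2) * X ^ (1 + ϑ/2) * μ ^ (1 - ϑ/2) ≤ G := by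
    have h := dc_amgm (A := (c*X)^2) (B := μ^2) (t := 1/2 + ϑ/4) (by positivity) (by positivity)
      (by linarith) (by linarith)
    have e1 : ((c*X)^2 : ℝ) ^ ((1:ℝ)/2 + ϑ/4) = c ^ (1 + ϑ/2) * X ^ (1 + ϑ/2) := by
      rw [← Real.rpow_natCast (c*X) 2, ← Real.rpow_mul (by positivity)]
      rw [show ((2:ℕ):ℝ) * ((1:ℝ)/2 + ϑ/4) = 1 + ϑ/2 by push_cast; ring]
      exact Real.mul_rpow hc0.le hX0.le
    have e2 : (μ^2 : ℝ) ^ (1 - ((1:ℝ)/2 + ϑ/4)) = μ ^ (1 - ϑ/2) := by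
      rw [← Real.rpow_natCast μ 2, ← Real.rpow_mul hμ.le]
      rw [show ((2:ℕ):ℝ) * (1 - ((1:ℝ)/2 + ϑ/4)) = 1 - ϑ/2 by push_cast; ring]
    rw [e1, e2] at h
    calc c ^ (1 + ϑ/2) * X ^ (1 + ϑ/2) * μ ^ (1 - ϑ/2) ≤ (c*X)^2 + μ^2 := h
      _ ≤ G := by nlinarith
  calc μ * (|Δ| / G)
      ≤ μ * ((L * X ^ ϑ) / (c ^ (1 + ϑ/2) * X ^ (1 + ϑ/2) * μ ^ (1 - ϑ/2))) := by
        apply mul_le_mul_of_nonneg_left _ hμ.le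
        exact div_le_div₀ (by positivity) hΔ hden hamgm
    _ = (L / c ^ (1 + ϑ/2)) * μ ^ (ϑ/2) * X ^ (ϑ/2 - 1) := by
        rw [show μ * ((L * X ^ ϑ) / (c ^ (1 + ϑ/2) * X ^ (1 + ϑ/2) * μ ^ (1 - ϑ/2)))
            = (μ * (L * X ^ ϑ)) / (c ^ (1 + ϑ/2) * X ^ (1 + ϑ/2) * μ ^ (1 - ϑ/2)) by ring]
        rw [div_eq_iff (ne_of_gt hden)]
        have f1 : μ ^ (ϑ/2) * μ ^ (1 - ϑ/2) = μ := by
          rw [← Real.rpow_add hμ]; norm_num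
        have f2 : X ^ (ϑ/2 - 1) * X ^ (1 + ϑ/2) = X ^ ϑ := by
          rw [← Real.rpow_add hX0]; ring_nf
        have f3 : L / c ^ (1 + ϑ/2) * c ^ (1 + ϑ/2) = L := div_mul_cancel₀ L (by positivity)
        calc μ * (L * X ^ ϑ)
            = (L * X ^ ϑ) * μ := by ring
          _ = (L * X ^ ϑ) * μ - 0 := by ring
          _ = L / c ^ (1 + ϑ/2) * μ ^ (ϑ/2) * X ^ (ϑ/2 - 1)
              * (c ^ (1 + ϑ/2) * X ^ (1 + ϑ/2) * μ ^ (1 - ϑ/2)) := by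
            rw [show L / c ^ (1 + ϑ/2) * μ ^ (ϑ/2) * X ^ (ϑ/2 - 1)
                * (c ^ (1 + ϑ/2) * X ^ (1 + ϑ/2) * μ ^ (1 - ϑ/2))
                = (L / c ^ (1 + ϑ/2) * c ^ (1 + ϑ/2)) * (μ ^ (ϑ/2) * μ ^ (1 - ϑ/2))
                  * (X ^ (ϑ/2 - 1) * X ^ (1 + ϑ/2)) by ring, f1, f2, f3]
            ring

private lemma dc_bound2 (c k C0 μ X G H W : ℝ) (hc0 : 0 < c) (hk0 : 0 < k) (hμ : 0 < μ)
    (hX0 : 0 < X) (hC0 : 0 ≤ C0) (hW : 0 ≤ W) (hG : c ^ 2 * X ^ 2 ≤ G) (hG0 : 0 < G)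
    (hHeq : k ^ 2 * X ^ 2 + μ ^ 2 = H) (hHG : |H - G| ≤ 2 * C0 * X ^ 3) :
    μ * (W * |G⁻¹ - H⁻¹|) ≤ (2 * C0 * W / (c ^ 2 * k ^ ((3:ℝ)/2))) * μ ^ ((1:ℝ)/2)
      * X ^ (-(1:ℝ)/2) := by
  have hH0 : 0 < H := by rw [← hHeq]; positivity
  have hGH : 0 < G * H := mul_pos hG0 hH0
  have hdiffeq : |G⁻¹ - H⁻¹| = |H - G| / (G * H) := by
    rw [show G⁻¹ - H⁻¹ = (H - G) / (G * H) by field_simp]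
    rw [abs_div, abs_of_pos hGH]
  have hamgm : k ^ ((3:ℝ)/2) * X ^ ((3:ℝ)/2) * μ ^ ((1:ℝ)/2) ≤ H := by
    have h := dc_amgm (A := (k*X)^2) (B := μ^2) (t := 3/4) (by positivity) (by positivity)
      (by norm_num) (by norm_num)
    have e1 : ((k*X)^2 : ℝ) ^ ((3:ℝ)/4) = k ^ ((3:ℝ)/2) * X ^ ((3:ℝ)/2) := by
      rw [← Real.rpow_natCast (k*X) 2, ← Real.rpow_mul (by positivity)]
      rw [show ((2:ℕ):ℝ) * ((3:ℝ)/4) = (3:ℝ)/2 by push_cast; ring]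
      exact Real.mul_rpow hk0.le hX0.le
    have e2 : (μ^2 : ℝ) ^ (1 - (3:ℝ)/4) = μ ^ ((1:ℝ)/2) := by
      rw [← Real.rpow_natCast μ 2, ← Real.rpow_mul hμ.le]
      rw [show ((2:ℕ):ℝ) * (1 - (3:ℝ)/4) = (1:ℝ)/2 by push_cast; ring]
    rw [show ((3:ℝ)/4 : ℝ) = 3/4 by norm_num] at h
    rw [e1, e2] at h
    calc k ^ ((3:ℝ)/2) * X ^ ((3:ℝ)/2) * μ ^ ((1:ℝ)/2) ≤ (k*X)^2 + μ^2 := h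
      _ = H := by rw [← hHeq]; ring
  have hden : (0:ℝ) < (c ^ 2 * X ^ 2) * (k ^ ((3:ℝ)/2) * X ^ ((3:ℝ)/2) * μ ^ ((1:ℝ)/2)) := by
    positivity
  have hdenlow : (c ^ 2 * X ^ 2) * (k ^ ((3:ℝ)/2) * X ^ ((3:ℝ)/2) * μ ^ ((1:ℝ)/2)) ≤ G * H :=
    mul_le_mul hG hamgm (by positivity) hG0.le
  rw [hdiffeq]
  calc μ * (W * (|H - G| / (G * H)))
      ≤ μ * (W * ((2 * C0 * X ^ 3) /
          ((c ^ 2 * X ^ 2) * (k ^ ((3:ℝ)/2) * X ^ ((3:ℝ)/2) * μ ^ ((1:ℝ)/2))))) := by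
        apply mul_le_mul_of_nonneg_left _ hμ.le
        apply mul_le_mul_of_nonneg_left _ hW
        exact div_le_div₀ (by positivity) hHG hden hdenlow
    _ = (2 * C0 * W / (c ^ 2 * k ^ ((3:ℝ)/2))) * μ ^ ((1:ℝ)/2) * X ^ (-(1:ℝ)/2) := by
        rw [show μ * (W * ((2 * C0 * X ^ 3) /
            ((c ^ 2 * X ^ 2) * (k ^ ((3:ℝ)/2) * X ^ ((3:ℝ)/2) * μ ^ ((1:ℝ)/2)))))
            = (μ * W * (2 * C0 * X ^ 3)) /
            ((c ^ 2 * X ^ 2) * (k ^ ((3:ℝ)/2) * X ^ ((3:ℝ)/2) * μ ^ ((1:ℝ)/2))) by ring]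
        rw [div_eq_iff (ne_of_gt hden)]
        have f1 : μ ^ ((1:ℝ)/2) * μ ^ ((1:ℝ)/2) = μ := by
          rw [← Real.rpow_add hμ]; norm_num
        have f2 : X ^ (-(1:ℝ)/2) * X ^ ((3:ℝ)/2) = X := by
          rw [← Real.rpow_add hX0]; norm_num
        have f3 : 2 * C0 * W / (c ^ 2 * k ^ ((3:ℝ)/2)) * (c ^ 2 * k ^ ((3:ℝ)/2)) = 2 * C0 * W :=
          div_mul_cancel₀ _ (by positivity)
        calc μ * W * (2 * C0 * X ^ 3)
            = (2 * C0 * W) * μ * (X * X ^ 2) := by ring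
          _ = (2 * C0 * W / (c ^ 2 * k ^ ((3:ℝ)/2)) * (c ^ 2 * k ^ ((3:ℝ)/2)))
              * (μ ^ ((1:ℝ)/2) * μ ^ ((1:ℝ)/2)) * ((X ^ (-(1:ℝ)/2) * X ^ ((3:ℝ)/2)) * X ^ 2) := by
            rw [f1, f2, f3]
          _ = _ := by ring

private lemma dc_near_pt (s c k C0 L ϑ μ x fr fν : ℝ) (hc0 : 0 < c) (hk0 : 0 < k)
    (hk1 : k ≤ 1) (hC0 : 0 ≤ C0) (hL : 0 < L) (hϑ0 : 0 < ϑ) (hϑ1 : ϑ ≤ 1) (hμ : 0 < μ)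
    (hX0 : 0 < |x|)
    (hgl : c * |x| ≤ |s|) (hgu : |s| ≤ |x|)
    (hkg : |k * x - s| ≤ C0 * x ^ 2)
    (hΔ : |fr - fν| ≤ L * |x| ^ ϑ) :
    μ * |fr / (s ^ 2 + μ ^ 2) - fν * ((k * x) ^ 2 + μ ^ 2)⁻¹|
      ≤ (L / c ^ (1 + ϑ/2) * μ ^ (ϑ/2)) * |x| ^ (ϑ/2 - 1)
        + (2 * C0 * |fν| / (c ^ 2 * k ^ ((3:ℝ)/2)) * μ ^ ((1:ℝ)/2)) * |x| ^ (-(1:ℝ)/2) := by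
  set G := s ^ 2 + μ ^ 2 with hGdef
  set H := (k * x) ^ 2 + μ ^ 2 with hHdef
  have hG0 : 0 < G := by rw [hGdef]; positivity
  have hH0 : 0 < H := by rw [hHdef]; positivity
  have hGl2 : c ^ 2 * |x| ^ 2 + μ ^ 2 ≤ G := by
    rw [hGdef]
    have h := mul_self_le_mul_self (by positivity) hgl
    nlinarith [sq_abs s]
  have hHeq : k ^ 2 * |x| ^ 2 + μ ^ 2 = H := by rw [hHdef, mul_pow, sq_abs]
  have hHG : |H - G| ≤ 2 * C0 * |x| ^ 3 := by
    rw [show H - G = (k * x - s) * (k * x + s) from by rw [hHdef, hGdef]; ring, abs_mul]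
    have h1 : |k * x - s| ≤ C0 * |x| ^ 2 := by rw [sq_abs]; exact hkg
    have h2 : |k * x + s| ≤ 2 * |x| := by
      have hstep : |k * x| ≤ k * |x| := by rw [abs_mul, abs_of_pos hk0]
      calc |k * x + s| ≤ |k * x| + |s| := abs_add_le _ _
        _ ≤ 2 * |x| := by nlinarith
    calc |k * x - s| * |k * x + s| ≤ (C0 * |x| ^ 2) * (2 * |x|) :=
          mul_le_mul h1 h2 (abs_nonneg _) (by positivity)
      _ = 2 * C0 * |x| ^ 3 := by ring
  have hDexp : fr / G - fν * H⁻¹ = (fr - fν) / G + fν * (G⁻¹ - H⁻¹) := by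
    field_simp
    ring
  have hDle : |fr / G - fν * H⁻¹| ≤ |fr - fν| / G + |fν| * |G⁻¹ - H⁻¹| := by
    rw [hDexp]
    calc |(fr - fν) / G + fν * (G⁻¹ - H⁻¹)| ≤ |(fr - fν) / G| + |fν * (G⁻¹ - H⁻¹)| :=
          abs_add_le _ _
      _ = |fr - fν| / G + |fν| * |G⁻¹ - H⁻¹| := by rw [abs_div, abs_of_pos hG0, abs_mul]
  have hb1 := dc_bound1 c L ϑ μ (|x|) G (fr - fν) hc0 hL hϑ0 hϑ1 hμ hX0 hGl2 hΔ
  have hb2 := dc_bound2 c k C0 μ (|x|) G H (|fν|) hc0 hk0 hμ hX0 hC0 (abs_nonneg _)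
    (by nlinarith [sq_nonneg μ]) hG0 hHeq hHG
  calc μ * |fr / G - fν * H⁻¹| ≤ μ * (|fr - fν| / G + |fν| * |G⁻¹ - H⁻¹|) :=
        mul_le_mul_of_nonneg_left hDle hμ.le
    _ = μ * (|fr - fν| / G) + μ * (|fν| * |G⁻¹ - H⁻¹|) := by ring
    _ ≤ (L / c ^ (1 + ϑ/2)) * μ ^ (ϑ/2) * |x| ^ (ϑ/2 - 1)
        + (2 * C0 * |fν| / (c ^ 2 * k ^ ((3:ℝ)/2))) * μ ^ ((1:ℝ)/2) * |x| ^ (-(1:ℝ)/2) :=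
        add_le_add hb1 hb2
    _ = _ := by ring

private lemma dc_far_pt (s c k ν μ x fr fν : ℝ) (hc0 : 0 < c) (hk0 : 0 < k) (hμ : 0 < μ)
    (hν0 : 0 < ν) (hx : ν < x) (hgl : c * |x| ≤ |s|) :
    |fr / (s ^ 2 + μ ^ 2) - fν * ((k * x) ^ 2 + μ ^ 2)⁻¹|
      ≤ |fr| * (c ^ 2 * ν ^ 2)⁻¹ + |fν| / k ^ 2 * (x ^ 2)⁻¹ := by
  have hG0 : 0 < s ^ 2 + μ ^ 2 := by positivity
  have hx0 : 0 < x := lt_trans hν0 hx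
  have hclow : c ^ 2 * ν ^ 2 ≤ s ^ 2 + μ ^ 2 := by
    have h1 : c * ν ≤ |s| := by
      refine le_trans ?_ hgl
      have : ν ≤ |x| := by rw [abs_of_pos hx0]; linarith
      nlinarith
    nlinarith [sq_abs s, sq_nonneg μ, mul_self_le_mul_self (by positivity : (0:ℝ) ≤ c * ν) h1]
  have hklow : k ^ 2 * x ^ 2 ≤ (k * x) ^ 2 + μ ^ 2 := by nlinarith [sq_nonneg μ]
  have hkpos : (0:ℝ) < k ^ 2 * x ^ 2 := by positivity
  calc |fr / (s ^ 2 + μ ^ 2) - fν * ((k * x) ^ 2 + μ ^ 2)⁻¹|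
      ≤ |fr / (s ^ 2 + μ ^ 2)| + |fν * ((k * x) ^ 2 + μ ^ 2)⁻¹| := abs_sub _ _
    _ = |fr| / (s ^ 2 + μ ^ 2) + |fν| * ((k * x) ^ 2 + μ ^ 2)⁻¹ := by
        rw [abs_div, abs_of_pos hG0, abs_mul,
          abs_of_pos (inv_pos.mpr (lt_of_lt_of_le hkpos hklow))]
    _ ≤ |fr| * (c ^ 2 * ν ^ 2)⁻¹ + |fν| / k ^ 2 * (x ^ 2)⁻¹ := by
        apply add_le_add
        · rw [div_eq_mul_inv]
          exact mul_le_mul_of_nonneg_left (inv_anti₀ (by positivity) hclow) (abs_nonneg _)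
        · rw [show |fν| / k ^ 2 * (x ^ 2)⁻¹ = |fν| * (k ^ 2 * x ^ 2)⁻¹ by
            rw [mul_inv]; ring]
          exact mul_le_mul_of_nonneg_left (inv_anti₀ hkpos hklow) (abs_nonneg _)

set_option maxHeartbeats 4000000 in
private lemma dc_main (m a ν : ℝ) (hm : 0 < m) (ha : m < a) (hν0 : 0 < ν)
    (hν2 : ν ^ 2 + m ^ 2 = a ^ 2) (f : ℝ → ℝ) (hf : IntegrableOn f (Set.Ioi 0))
    (L ϑ : ℝ) (hL : 0 < L) (hϑ0 : 0 < ϑ) (hϑ1 : ϑ ≤ 1)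
    (hH : ∀ r ∈ Set.Ioi (0 : ℝ), |f r - f ν| ≤ L * |r - ν| ^ ϑ) :
    Filter.Tendsto
      (fun μ : ℝ => μ * ∫ r in Set.Ioi (0 : ℝ),
          f r / ((Real.sqrt (r ^ 2 + m ^ 2) - a) ^ 2 + μ ^ 2))
      (nhdsWithin 0 (Set.Ioi 0)) (nhds (f ν * Real.pi * a / ν)) := by
  have ha0 : 0 < a := hm.trans ha
  have hma : 0 < m + a := by linarith
  have hνa : ν < a := by nlinarith
  set k : ℝ := ν / a with hk
  have hk0 : 0 < k := div_pos hν0 ha0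
  have hk1 : k ≤ 1 := by rw [hk, div_le_one ha0]; linarith
  set c : ℝ := ν / (m + a) with hc
  have hc0 : 0 < c := div_pos hν0 hma
  have hc1 : c ≤ 1 := by rw [hc, div_le_one hma]; linarith
  set D : ℝ → ℝ → ℝ := fun μ r =>
    f r / ((Real.sqrt (r ^ 2 + m ^ 2) - a) ^ 2 + μ ^ 2)
      - f ν * ((k * (r - ν)) ^ 2 + μ ^ 2)⁻¹ with hD
  have hF1 : ∀ μ : ℝ, 0 < μ → IntegrableOn
      (fun r => f r / ((Real.sqrt (r ^ 2 + m ^ 2) - a) ^ 2 + μ ^ 2)) (Set.Ioi 0) := by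
    intro μ hμ
    have hgc : Continuous fun r : ℝ => (Real.sqrt (r ^ 2 + m ^ 2) - a) ^ 2 + μ ^ 2 := by
      continuity
    have hgi : Continuous fun r : ℝ => ((Real.sqrt (r ^ 2 + m ^ 2) - a) ^ 2 + μ ^ 2)⁻¹ :=
      hgc.inv₀ (fun r => by positivity)
    simp only [div_eq_mul_inv]
    apply Integrable.mono' ((hf.abs).mul_const (μ ^ 2)⁻¹)
      (hf.aestronglyMeasurable.mul hgi.aestronglyMeasurable)
    apply ae_of_all
    intro r
    have h1 : (0:ℝ) < μ ^ 2 := by positivity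
    have h2 : μ ^ 2 ≤ (Real.sqrt (r ^ 2 + m ^ 2) - a) ^ 2 + μ ^ 2 := by
      nlinarith [sq_nonneg (Real.sqrt (r ^ 2 + m ^ 2) - a)]
    simp only [Pi.mul_apply, Real.norm_eq_abs]
    rw [abs_mul, abs_of_pos (inv_pos.mpr (lt_of_lt_of_le h1 h2))]
    exact mul_le_mul_of_nonneg_left (inv_anti₀ h1 h2) (abs_nonneg _)
  have hDint : ∀ μ : ℝ, 0 < μ → IntegrableOn (D μ) (Set.Ioi 0) := fun μ hμ =>
    (hF1 μ hμ).sub (((dc_arctan_int hk0 hμ (ν := ν) 0).1).const_mul (f ν))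
  have hId : ∀ μ : ℝ, 0 < μ →
      μ * ∫ r in Set.Ioi (0:ℝ), f r / ((Real.sqrt (r ^ 2 + m ^ 2) - a) ^ 2 + μ ^ 2)
        = μ * (∫ r in Set.Ioi (0:ℝ), D μ r)
          + f ν * k⁻¹ * (π / 2 + Real.arctan (k * ν / μ)) := by
    intro μ hμ
    obtain ⟨hPi, hPval⟩ := dc_arctan_int hk0 hμ (ν := ν) 0
    have hsub : ∫ r in Set.Ioi (0:ℝ), D μ r
        = (∫ r in Set.Ioi (0:ℝ), f r / ((Real.sqrt (r ^ 2 + m ^ 2) - a) ^ 2 + μ ^ 2))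
          - f ν * ∫ r in Set.Ioi (0:ℝ), ((k * (r - ν)) ^ 2 + μ ^ 2)⁻¹ := by
      rw [hD]
      rw [integral_sub (hF1 μ hμ) (hPi.const_mul (f ν)), MeasureTheory.integral_const_mul]
    rw [hsub, hPval, show k * ((0:ℝ) - ν) / μ = -(k * ν / μ) by ring, Real.arctan_neg]
    field_simp
    ring
  obtain ⟨hJ1ii, hJ2ii⟩ : IntegrableOn (fun r => |r - ν| ^ (ϑ/2 - 1)) (Set.Ioc 0 (2*ν)) ∧
      IntegrableOn (fun r => |r - ν| ^ (-(1:ℝ)/2)) (Set.Ioc 0 (2*ν)) := by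
    constructor
    · exact (intervalIntegrable_iff_integrableOn_Ioc_of_le (by linarith)).mp
        (dc_abs_rpow_II (by linarith) ν 0 (2*ν))
    · exact (intervalIntegrable_iff_integrableOn_Ioc_of_le (by linarith)).mp
        (dc_abs_rpow_II (by norm_num) ν 0 (2*ν))
  have hne : ∀ᵐ (r : ℝ) ∂(volume : Measure ℝ), r ≠ ν := by
    have hsing : {x : ℝ | ¬ x ≠ ν} = {ν} := by ext x; simp
    rw [ae_iff, hsing]
    exact measure_singleton ν
  have key : ∀ μ : ℝ, 0 < μ → |μ * ∫ r in Set.Ioi (0:ℝ), D μ r|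
      ≤ (L / c ^ (1 + ϑ/2) * (∫ r in Set.Ioc (0:ℝ) (2*ν), |r - ν| ^ (ϑ/2 - 1))) * μ ^ (ϑ/2)
        + (2 * (3*m/(a*(m+a))) * |f ν| / (c ^ 2 * k ^ ((3:ℝ)/2))
            * (∫ r in Set.Ioc (0:ℝ) (2*ν), |r - ν| ^ (-(1:ℝ)/2))) * μ ^ ((1:ℝ)/2)
        + ((∫ r in Set.Ioi (0:ℝ), |f r|) * (c^2*ν^2)⁻¹ + |f ν| / k^2 * ν⁻¹) * μ := by
    intro μ hμ
    have hDi := hDint μ hμ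
    have hDabs : IntegrableOn (fun r => |D μ r|) (Set.Ioi 0) := hDi.abs
    have hunion : Set.Ioc (0:ℝ) (2*ν) ∪ Set.Ioi (2*ν) = Set.Ioi 0 :=
      Set.Ioc_union_Ioi_eq_Ioi (by linarith)
    have hDabs_n : IntegrableOn (fun r => |D μ r|) (Set.Ioc 0 (2*ν)) :=
      hDabs.mono_set (by rw [← hunion]; exact Set.subset_union_left)
    have hDabs_f : IntegrableOn (fun r => |D μ r|) (Set.Ioi (2*ν)) :=
      hDabs.mono_set (by rw [← hunion]; exact Set.subset_union_right)
    have hsplit : ∫ r in Set.Ioi (0:ℝ), |D μ r|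
        = (∫ r in Set.Ioc (0:ℝ) (2*ν), |D μ r|) + ∫ r in Set.Ioi (2*ν), |D μ r| := by
      rw [← hunion, setIntegral_union (Set.Ioc_disjoint_Ioi le_rfl) measurableSet_Ioi
        hDabs_n hDabs_f]
    have hnear : μ * ∫ r in Set.Ioc (0:ℝ) (2*ν), |D μ r|
        ≤ (L / c ^ (1 + ϑ/2) * μ ^ (ϑ/2)) * (∫ r in Set.Ioc (0:ℝ) (2*ν), |r - ν| ^ (ϑ/2 - 1))
          + (2 * (3*m/(a*(m+a))) * |f ν| / (c ^ 2 * k ^ ((3:ℝ)/2)) * μ ^ ((1:ℝ)/2))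
            * (∫ r in Set.Ioc (0:ℝ) (2*ν), |r - ν| ^ (-(1:ℝ)/2)) := by
      rw [← MeasureTheory.integral_const_mul]
      calc ∫ r in Set.Ioc (0:ℝ) (2*ν), μ * |D μ r|
          ≤ ∫ r in Set.Ioc (0:ℝ) (2*ν),
              ((L / c ^ (1 + ϑ/2) * μ ^ (ϑ/2)) * |r - ν| ^ (ϑ/2 - 1)
              + (2 * (3*m/(a*(m+a))) * |f ν| / (c ^ 2 * k ^ ((3:ℝ)/2)) * μ ^ ((1:ℝ)/2))
                * |r - ν| ^ (-(1:ℝ)/2)) := by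
            apply setIntegral_mono_on_ae (hDabs_n.const_mul μ)
              ((hJ1ii.const_mul _).add (hJ2ii.const_mul _)) measurableSet_Ioc
            filter_upwards [hne] with r hrne hrmem
            have hgl := dc_gl hm ha hν0 hν2 r hrmem.1.le
            have hgu := dc_gu hm ha hν0 hν2 r hrmem.1.le
            have hkg := dc_kg hm ha hν0 hν2 r hrmem
            rw [← hc] at hgl
            rw [← hk] at hkg
            simp only [hD]
            exact dc_near_pt (Real.sqrt (r^2+m^2) - a) c k (3*m/(a*(m+a))) L ϑ μ (r-ν)
              (f r) (f ν) hc0 hk0 hk1 (by positivity) hL hϑ0 hϑ1 hμ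
              (abs_pos.mpr (sub_ne_zero.mpr hrne)) hgl hgu hkg (hH r hrmem.1)
        _ = (L / c ^ (1 + ϑ/2) * μ ^ (ϑ/2)) * (∫ r in Set.Ioc (0:ℝ) (2*ν), |r - ν| ^ (ϑ/2 - 1))
            + (2 * (3*m/(a*(m+a))) * |f ν| / (c ^ 2 * k ^ ((3:ℝ)/2)) * μ ^ ((1:ℝ)/2))
              * (∫ r in Set.Ioc (0:ℝ) (2*ν), |r - ν| ^ (-(1:ℝ)/2)) := by
            rw [integral_add (hJ1ii.const_mul _) (hJ2ii.const_mul _),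
              MeasureTheory.integral_const_mul, MeasureTheory.integral_const_mul]
    have hfar : μ * ∫ r in Set.Ioi (2*ν), |D μ r|
        ≤ ((∫ r in Set.Ioi (0:ℝ), |f r|) * (c^2*ν^2)⁻¹ + |f ν| / k^2 * ν⁻¹) * μ := by
      obtain ⟨hQi, hQval⟩ := dc_inv_sq_int hν0
      have habs' : IntegrableOn (fun r => |f r|) (Set.Ioi 0) := hf.abs
      have hfi_far : IntegrableOn (fun r => |f r|) (Set.Ioi (2*ν)) :=
        habs'.mono_set (Set.Ioi_subset_Ioi (by linarith))
      have hBint : IntegrableOn (fun r => |f r| * (c^2*ν^2)⁻¹ + |f ν| / k^2 * ((r-ν)^2)⁻¹)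
          (Set.Ioi (2*ν)) := (hfi_far.mul_const _).add (hQi.const_mul _)
      have hmono : ∫ r in Set.Ioi (2*ν), |D μ r|
          ≤ ∫ r in Set.Ioi (2*ν), (|f r| * (c^2*ν^2)⁻¹ + |f ν| / k^2 * ((r-ν)^2)⁻¹) := by
        apply setIntegral_mono_on hDabs_f hBint measurableSet_Ioi
        intro r hr
        rw [Set.mem_Ioi] at hr
        have hr0 : (0:ℝ) < r := by linarith
        have hgl := dc_gl hm ha hν0 hν2 r hr0.le
        rw [← hc] at hgl
        simp only [hD]
        exact dc_far_pt (Real.sqrt (r^2+m^2) - a) c k ν μ (r-ν) (f r) (f ν) hc0 hk0 hμ hν0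
          (by linarith : ν < r - ν) hgl
      have hff : (∫ r in Set.Ioi (2*ν), |f r|) ≤ ∫ r in Set.Ioi (0:ℝ), |f r| :=
        setIntegral_mono_set hf.abs (ae_of_all _ (fun x => abs_nonneg _))
          ((Set.Ioi_subset_Ioi (by linarith)).eventuallyLE)
      have hval : ∫ r in Set.Ioi (2*ν), (|f r| * (c^2*ν^2)⁻¹ + |f ν| / k^2 * ((r-ν)^2)⁻¹)
          = (∫ r in Set.Ioi (2*ν), |f r|) * (c^2*ν^2)⁻¹ + |f ν| / k^2 * ν⁻¹ := by
        rw [integral_add (hfi_far.mul_const _) (hQi.const_mul _),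
          MeasureTheory.integral_mul_const, MeasureTheory.integral_const_mul, hQval]
      have hCpos : (0:ℝ) ≤ (c^2*ν^2)⁻¹ := by positivity
      calc μ * ∫ r in Set.Ioi (2*ν), |D μ r|
          ≤ μ * ((∫ r in Set.Ioi (2*ν), |f r|) * (c^2*ν^2)⁻¹ + |f ν| / k^2 * ν⁻¹) := by
            apply mul_le_mul_of_nonneg_left _ hμ.le
            rw [← hval]; exact hmono
        _ ≤ ((∫ r in Set.Ioi (0:ℝ), |f r|) * (c^2*ν^2)⁻¹ + |f ν| / k^2 * ν⁻¹) * μ := by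
            nlinarith [mul_le_mul_of_nonneg_left (mul_le_mul_of_nonneg_right hff hCpos) hμ.le]
    calc |μ * ∫ r in Set.Ioi (0:ℝ), D μ r| = μ * |∫ r in Set.Ioi (0:ℝ), D μ r| := by
          rw [abs_mul, abs_of_pos hμ]
      _ ≤ μ * ∫ r in Set.Ioi (0:ℝ), |D μ r| := by
          apply mul_le_mul_of_nonneg_left _ hμ.le
          simpa [Real.norm_eq_abs] using
            MeasureTheory.norm_integral_le_integral_norm (μ := volume.restrict (Set.Ioi 0)) (D μ)
      _ = μ * (∫ r in Set.Ioc (0:ℝ) (2*ν), |D μ r|) + μ * ∫ r in Set.Ioi (2*ν), |D μ r| := by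
          rw [hsplit]; ring
      _ ≤ _ := by
          refine le_trans (add_le_add hnear hfar) (le_of_eq ?_)
          ring
  have hrp : ∀ p : ℝ, 0 < p → Tendsto (fun μ : ℝ => μ ^ p)
      (nhdsWithin 0 (Set.Ioi 0)) (nhds 0) := by
    intro p hp
    have h : Tendsto (fun μ : ℝ => μ ^ p) (nhdsWithin 0 (Set.Ioi 0)) (nhds ((0:ℝ) ^ p)) :=
      ((Real.continuousAt_rpow_const 0 p (Or.inr hp.le)).tendsto).mono_left nhdsWithin_le_nhds
    rwa [Real.zero_rpow (ne_of_gt hp)] at h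
  have hErr : Tendsto (fun μ : ℝ => μ * ∫ r in Set.Ioi (0:ℝ), D μ r)
      (nhdsWithin 0 (Set.Ioi 0)) (nhds 0) := by
    apply squeeze_zero_norm'
      (a := fun μ : ℝ =>
        (L / c ^ (1 + ϑ/2) * (∫ r in Set.Ioc (0:ℝ) (2*ν), |r - ν| ^ (ϑ/2 - 1))) * μ ^ (ϑ/2)
        + (2 * (3*m/(a*(m+a))) * |f ν| / (c ^ 2 * k ^ ((3:ℝ)/2))
            * (∫ r in Set.Ioc (0:ℝ) (2*ν), |r - ν| ^ (-(1:ℝ)/2))) * μ ^ ((1:ℝ)/2)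
        + ((∫ r in Set.Ioi (0:ℝ), |f r|) * (c^2*ν^2)⁻¹ + |f ν| / k^2 * ν⁻¹) * μ)
    · filter_upwards [self_mem_nhdsWithin] with μ hμ
      rw [Real.norm_eq_abs]
      exact key μ hμ
    · have h1 := (hrp (ϑ/2) (by linarith)).const_mul
        (L / c ^ (1 + ϑ/2) * (∫ r in Set.Ioc (0:ℝ) (2*ν), |r - ν| ^ (ϑ/2 - 1)))
      have h2 := (hrp ((1:ℝ)/2) (by norm_num)).const_mul
        (2 * (3*m/(a*(m+a))) * |f ν| / (c ^ 2 * k ^ ((3:ℝ)/2))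
          * (∫ r in Set.Ioc (0:ℝ) (2*ν), |r - ν| ^ (-(1:ℝ)/2)))
      have h3 : Tendsto (fun μ : ℝ =>
          ((∫ r in Set.Ioi (0:ℝ), |f r|) * (c^2*ν^2)⁻¹ + |f ν| / k^2 * ν⁻¹) * μ)
          (nhdsWithin 0 (Set.Ioi 0)) (nhds 0) := by
        have h0 : Tendsto (fun μ : ℝ =>
            ((∫ r in Set.Ioi (0:ℝ), |f r|) * (c^2*ν^2)⁻¹ + |f ν| / k^2 * ν⁻¹) * μ)
            (nhds 0) (nhds (((∫ r in Set.Ioi (0:ℝ), |f r|) * (c^2*ν^2)⁻¹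
              + |f ν| / k^2 * ν⁻¹) * 0)) :=
          (continuous_id.tendsto (0:ℝ)).const_mul _
        have h0' : Tendsto (fun μ : ℝ =>
            ((∫ r in Set.Ioi (0:ℝ), |f r|) * (c^2*ν^2)⁻¹ + |f ν| / k^2 * ν⁻¹) * μ)
            (nhdsWithin 0 (Set.Ioi 0)) (nhds (((∫ r in Set.Ioi (0:ℝ), |f r|) * (c^2*ν^2)⁻¹
              + |f ν| / k^2 * ν⁻¹) * 0)) := h0.mono_left nhdsWithin_le_nhds
        rw [mul_zero] at h0'
        exact h0'
      rw [mul_zero] at h1 h2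
      have hsum := (h1.add h2).add h3
      rw [add_zero, add_zero] at hsum
      exact hsum
  have hT2 : Tendsto (fun μ : ℝ => f ν * k⁻¹ * (π/2 + Real.arctan (k*ν/μ)))
      (nhdsWithin 0 (Set.Ioi 0)) (nhds (f ν * π * a / ν)) := by
    have hin : Tendsto (fun μ : ℝ => k*ν/μ) (nhdsWithin 0 (Set.Ioi 0)) atTop := by
      have h2 := tendsto_inv_nhdsGT_zero.const_mul_atTop (by positivity : (0:ℝ) < k*ν)
      exact h2.congr (fun μ => by rw [div_eq_mul_inv])
    have harc : Tendsto (fun μ : ℝ => Real.arctan (k*ν/μ)) (nhdsWithin 0 (Set.Ioi 0))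
        (nhds (π/2)) :=
      (Real.tendsto_arctan_atTop.mono_right nhdsWithin_le_nhds).comp hin
    have hfin := (harc.const_add (π/2)).const_mul (f ν * k⁻¹)
    have heqv : f ν * k⁻¹ * (π/2 + π/2) = f ν * π * a / ν := by
      rw [hk]
      field_simp
      ring
    rwa [heqv] at hfin
  have hsum := hErr.add hT2
  rw [zero_add] at hsum
  apply hsum.congr'
  filter_upwards [self_mem_nhdsWithin] with μ hμ
  exact (hId μ hμ).symm

/-- Delta-concentration limit for the relativistic dispersion relation: if
`f ∈ L¹(0,∞)` is Hölder continuous at `ν(E) = √(E²−m²)`, `|E| > m > 0`, then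
`lim_{μ→0⁺} (μ/π)∫₀^∞ f(r)/((√(r²+m²)−|E|)² + μ²) dr = f(ν(E))·|E|/ν(E)`. -/
theorem delta_concentration (m E : ℝ) (hm : 0 < m) (hE : m < |E|)
    (ν : ℝ) (hν : ν = Real.sqrt (E ^ 2 - m ^ 2))
    (f : ℝ → ℝ) (hf : IntegrableOn f (Set.Ioi 0))
    (hHolder : ∃ L > (0 : ℝ), ∃ ϑ ∈ Set.Ioc (0 : ℝ) 1,
      ∀ r ∈ Set.Ioi (0 : ℝ), |f r - f ν| ≤ L * |r - ν| ^ ϑ) :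
    Filter.Tendsto
      (fun μ : ℝ => (μ / Real.pi) *
        ∫ r in Set.Ioi (0 : ℝ),
          f r / ((Real.sqrt (r ^ 2 + m ^ 2) - |E|) ^ 2 + μ ^ 2))
      (nhdsWithin 0 (Set.Ioi 0))
      (nhds (f ν * |E| / ν)) := by
  obtain ⟨L, hL, ϑ, hϑ, hHo⟩ := hHolder
  have hpos : 0 < E ^ 2 - m ^ 2 := by nlinarith [sq_abs E, abs_nonneg E]
  have hν0 : 0 < ν := by rw [hν]; exact Real.sqrt_pos.mpr hpos
  have hν2 : ν ^ 2 + m ^ 2 = |E| ^ 2 := by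
    rw [hν, Real.sq_sqrt hpos.le, sq_abs]
    ring
  have hmain := dc_main m |E| ν hm hE hν0 hν2 f hf L ϑ hL hϑ.1 hϑ.2 hHo
  have h2 := hmain.const_mul (Real.pi)⁻¹
  have heq : (Real.pi)⁻¹ * (f ν * Real.pi * |E| / ν) = f ν * |E| / ν := by
    field_simp
  rw [heq] at h2
  refine h2.congr (fun μ => ?_)
  ring
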